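/- arXiv:2105.14999 — 4 statements merged into one kernel-verified Lean document; each statement's English description precedes it below -/
import Mathlib

section
/- With S(x,y) = R((n/2)ln y − ln x + n/2) (the ideal-gas entropy), the functions H₁ = k₁x, H₂ = 0, H₃ = k₂x^((n+2)/n), H₅ = 2k₁x(k₁ζ − Ry)/(Rn) satisfy xy(xH₁·∂S/∂x − H₅·∂S/∂y) + κ(H₂·∂H₃/∂x + H₃·∂H₃/∂y) + ζH₁² = 0 for all x > 0, y > 0. -/
theorem quotient_eq1_ideal (k₁ k₂ R n ζ κ : ℝ) (hR : R ≠ 0) (hn : n ≠ 0) :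
    ∀ x y : ℝ, 0 < x → 0 < y →
      x*y*(x*(k₁*x) * deriv (fun x' => R*(n/2 * Real.log y - Real.log x' + n/2)) x
          - (2*k₁*x*(k₁*ζ - R*y)/(R*n)) *
              deriv (fun y' => R*(n/2 * Real.log y' - Real.log x + n/2)) y)
        + κ*(0 * deriv (fun x' => k₂ * x' ^ ((n+2)/n)) x
          + (k₂ * x ^ ((n+2)/n)) * deriv (fun _y' : ℝ => k₂ * x ^ ((n+2)/n)) y)
        + ζ*(k₁*x)^2 = 0 := by
  intro x y hx hy
  have h1 : HasDerivAt (fun x' => R*(n/2 * Real.log y - Real.log x' + n/2))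
      (R * (-x⁻¹)) x := by
    have := (((Real.hasDerivAt_log hx.ne').const_sub (n/2 * Real.log y)).add_const
      (n/2)).const_mul R
    simpa using this
  have h2 : HasDerivAt (fun y' => R*(n/2 * Real.log y' - Real.log x + n/2))
      (R * (n/2 * y⁻¹)) y := by
    have := ((((Real.hasDerivAt_log hy.ne').const_mul (n/2)).sub_const
      (Real.log x)).add_const (n/2)).const_mul R
    simpa using this
  rw [h1.deriv, h2.deriv, deriv_const]
  field_simp
  ring
end

section
/- The functions H₁,₀(y) = y^(2−2gλ/(c₁R))(c₂y^(−gλ/(c₁R)) + c₃), H₂,₀(y) = (gλ−Rc₁)/(Ry), H₃,₀(y) = c₁, H₅,₀(y) = y^(3−2gλ/(Rc₁))(c₃ + Rc₁c₂y^(−gλ/(Rc₁))/(Rc₁−gλ)) satisfy the ODE H₅,₀H₂,₀′ + H₃,₀H₁,₀′ + 3H₁,₀H₂,₀ = 0 for all y > 0. -/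
theorem virial_zeroth_eq3 (R g lam c₁ c₂ c₃ : ℝ)
    (hR : R ≠ 0) (hc₁ : c₁ ≠ 0) (h : R*c₁ - g*lam ≠ 0) :
    ∀ y : ℝ, 0 < y →
      (y ^ (3 - 2*g*lam/(R*c₁)) *
            (c₃ + R*c₁*c₂ * y ^ (-(g*lam/(R*c₁))) / (R*c₁ - g*lam))) *
          deriv (fun y' => (g*lam - R*c₁)/(R*y')) y
        + c₁ * deriv (fun y' => y' ^ (2 - 2*g*lam/(c₁*R)) *
              (c₂ * y' ^ (-(g*lam/(c₁*R))) + c₃)) y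
        + 3 * (y ^ (2 - 2*g*lam/(c₁*R)) * (c₂ * y ^ (-(g*lam/(c₁*R))) + c₃)) *
            ((g*lam - R*c₁)/(R*y)) = 0 := by
  intro y hy
  have hy0 : y ≠ 0 := hy.ne'
  set a : ℝ := 2 - 2*g*lam/(c₁*R) with ha
  set b : ℝ := -(g*lam/(c₁*R)) with hb
  have h2 : deriv (fun y' => (g*lam - R*c₁)/(R*y')) y
      = ((g*lam - R*c₁)/R) * (-(y^2)⁻¹) := by
    have heq : (fun y' : ℝ => (g*lam - R*c₁)/(R*y'))
        = fun y' => ((g*lam - R*c₁)/R) * y'⁻¹ := by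
      funext y'
      rw [mul_comm R y', ← div_div, div_eq_mul_inv]
      ring
    rw [heq]
    exact ((hasDerivAt_inv hy0).const_mul _).deriv
  have h1 : deriv (fun y' : ℝ => y' ^ a * (c₂ * y' ^ b + c₃)) y
      = (a * y ^ (a-1)) * (c₂ * y ^ b + c₃) + y ^ a * (c₂ * (b * y ^ (b-1))) := by
    have d1 : HasDerivAt (fun y' : ℝ => y' ^ a) (a * y ^ (a-1)) y :=
      Real.hasDerivAt_rpow_const (Or.inl hy0)
    have d2 : HasDerivAt (fun y' : ℝ => c₂ * y' ^ b + c₃) (c₂ * (b * y ^ (b-1))) y :=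
      ((Real.hasDerivAt_rpow_const (p := b) (Or.inl hy0)).const_mul c₂).add_const c₃
    exact (d1.mul d2).deriv
  have e1 : y ^ (3 - 2*g*lam/(R*c₁)) = y ^ a * y := by
    have : (3 - 2*g*lam/(R*c₁)) = a + 1 := by rw [ha]; ring_nf
    rw [this, Real.rpow_add hy, Real.rpow_one]
  have e2 : y ^ (a - 1) = y ^ a * y⁻¹ := by
    rw [Real.rpow_sub hy, Real.rpow_one, div_eq_mul_inv]
  have e3 : y ^ (b - 1) = y ^ b * y⁻¹ := by
    rw [Real.rpow_sub hy, Real.rpow_one, div_eq_mul_inv]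
  have e4 : y ^ (-(g*lam/(R*c₁))) = y ^ b := by rw [hb, mul_comm R c₁]
  rw [h1, h2, e1, e2, e3, e4]
  have hA : y ^ a ≠ 0 := (Real.rpow_pos_of_pos hy _).ne'
  have hB : y ^ b ≠ 0 := (Real.rpow_pos_of_pos hy _).ne'
  set A := y ^ a with hAdef
  set B := y ^ b with hBdef
  clear_value A B
  rw [ha, hb]
  field_simp
  ring
end

section
/- The vector field V = α₁x∂_x + α₂y∂_y + (α₁+α₂)H₁∂_{H₁} + (2α₁+α₂/2)H₂∂_{H₂} + (α₁+3α₂/2)H₃∂_{H₃} + (α₁+3α₂/2)(H₄−gλ)∂_{H₄} + (α₁+2α₂)H₅∂_{H₅} generates a one-parameter scaling group under which the third quotient equation H₂H₅_y-type expression is invariant; concretely, under the scaling x ↦ e^(α₁ε)x, y ↦ e^(α₂ε)y, H₁ ↦ e^((α₁+α₂)ε)H₁, H₂ ↦ e^((2α₁+α₂/2)ε)H₂, H₃ ↦ e^((α₁+3α₂/2)ε)H₃, H₅ ↦ e^((α₁+2α₂)ε)H₅, the expression E₃ = H₅·∂H₂/∂y + x(H₃·∂H₁/∂y − H₁·∂H₂/∂x)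 + H₂(x·∂H₁/∂x + 2H₁) is multiplied by the factor e^((3α₁+3α₂/2)ε). -/
/-- The third quotient equation expression
`E₃ = H₅·∂H₂/∂y + x(H₃·∂H₁/∂y − H₁·∂H₂/∂x) + H₂(x·∂H₁/∂x + 2H₁)`. -/
noncomputable def E3 (H₁ H₂ H₃ H₅ : ℝ → ℝ → ℝ) (x y : ℝ) : ℝ :=
  H₅ x y * deriv (fun y' => H₂ x y') y
    + x * (H₃ x y * deriv (fun y' => H₁ x y') y - H₁ x y * deriv (fun x' => H₂ x' y) x)
    + H₂ x y * (x * deriv (fun x' => H₁ x' y) x + 2 * H₁ x y)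

private lemma deriv_scaled_y (H : ℝ → ℝ → ℝ)
    (h : Differentiable ℝ (fun q : ℝ × ℝ => H q.1 q.2)) (c a b x y : ℝ) :
    deriv (fun y' => c * H (a * x) (b * y')) y
      = c * b * deriv (fun y' => H (a * x) y') (b * y) := by
  have hF : Differentiable ℝ (fun y' => H (a * x) y') :=
    h.comp (differentiable_const _ |>.prodMk differentiable_id)
  have h1 : HasDerivAt (fun y' : ℝ => b * y') b y := by
    simpa using (hasDerivAt_id y).const_mul b
  have h2 : HasDerivAt (fun y' => H (a * x) y') (deriv (fun y' => H (a*x) y') (b*y)) (b*y) :=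
    (hF (b*y)).hasDerivAt
  have h3 : HasDerivAt (fun y' => H (a * x) (b * y'))
      (deriv (fun y' => H (a*x) y') (b*y) * b) y := h2.comp y h1
  have := (h3.const_mul c).deriv
  rw [this]; ring

private lemma deriv_scaled_x (H : ℝ → ℝ → ℝ)
    (h : Differentiable ℝ (fun q : ℝ × ℝ => H q.1 q.2)) (c a b x y : ℝ) :
    deriv (fun x' => c * H (a * x') (b * y)) x
      = c * a * deriv (fun x' => H x' (b * y)) (a * x) := by
  have hF : Differentiable ℝ (fun x' => H x' (b * y)) :=
    h.comp (differentiable_id.prodMk (differentiable_const _))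
  have h1 : HasDerivAt (fun x' : ℝ => a * x') a x := by
    simpa using (hasDerivAt_id x).const_mul a
  have h2 : HasDerivAt (fun x' => H x' (b * y)) (deriv (fun x' => H x' (b*y)) (a*x)) (a*x) :=
    (hF (a*x)).hasDerivAt
  have h3 : HasDerivAt (fun x' => H (a * x') (b * y))
      (deriv (fun x' => H x' (b*y)) (a*x) * a) x := h2.comp x h1
  have := (h3.const_mul c).deriv
  rw [this]; ring

theorem scaling_symmetry_E3 (α₁ α₂ ε g lam : ℝ) (H₁ H₂ H₃ H₅ : ℝ → ℝ → ℝ)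
    (h₁ : Differentiable ℝ (fun q : ℝ × ℝ => H₁ q.1 q.2))
    (h₂ : Differentiable ℝ (fun q : ℝ × ℝ => H₂ q.1 q.2))
    (h₃ : Differentiable ℝ (fun q : ℝ × ℝ => H₃ q.1 q.2))
    (h₅ : Differentiable ℝ (fun q : ℝ × ℝ => H₅ q.1 q.2)) :
    ∀ x y : ℝ,
      E3 (fun x' y' => Real.exp ((α₁+α₂)*ε) * H₁ (Real.exp (-α₁*ε) * x') (Real.exp (-α₂*ε) * y'))
         (fun x' y' => Real.exp ((2*α₁+α₂/2)*ε) * H₂ (Real.exp (-α₁*ε) * x') (Real.exp (-α₂*ε) * y'))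
         (fun x' y' => Real.exp ((α₁+3*α₂/2)*ε) * H₃ (Real.exp (-α₁*ε) * x') (Real.exp (-α₂*ε) * y'))
         (fun x' y' => Real.exp ((α₁+2*α₂)*ε) * H₅ (Real.exp (-α₁*ε) * x') (Real.exp (-α₂*ε) * y'))
         x y
      = Real.exp ((3*α₁+3*α₂/2)*ε) *
          E3 H₁ H₂ H₃ H₅ (Real.exp (-α₁*ε) * x) (Real.exp (-α₂*ε) * y) := by
  intro x y
  unfold E3
  rw [deriv_scaled_y H₂ h₂, deriv_scaled_y H₁ h₁, deriv_scaled_x H₂ h₂, deriv_scaled_x H₁ h₁]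
  generalize hu : Real.exp (-α₁*ε) * x = u
  have hx : x = Real.exp (α₁*ε) * u := by
    rw [← hu, ← mul_assoc, ← Real.exp_add]; simp
  rw [hx]
  have h1 : ∀ t : ℝ, Real.exp (-α₁*ε) * (Real.exp (α₁*ε) * t) = t := by
    intro t; rw [← mul_assoc, ← Real.exp_add]; simp
  simp only [h1]
  simp only [← Real.exp_add]
  have e1 : Real.exp ((α₁+2*α₂)*ε) * Real.exp ((2*α₁+α₂/2)*ε + -α₂*ε)
      = Real.exp ((3*α₁+3*α₂/2)*ε) := by rw [← Real.exp_add]; ring_nf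
  have e2 : Real.exp (α₁*ε) * (Real.exp ((α₁+3*α₂/2)*ε) * Real.exp ((α₁+α₂)*ε + -α₂*ε))
      = Real.exp ((3*α₁+3*α₂/2)*ε) := by rw [← Real.exp_add, ← Real.exp_add]; ring_nf
  have e3 : Real.exp (α₁*ε) * (Real.exp ((α₁+α₂)*ε) * Real.exp ((2*α₁+α₂/2)*ε + -α₁*ε))
      = Real.exp ((3*α₁+3*α₂/2)*ε) := by rw [← Real.exp_add, ← Real.exp_add]; ring_nf
  have e4 : Real.exp ((2*α₁+α₂/2)*ε) * (Real.exp (α₁*ε) * Real.exp ((α₁+α₂)*ε + -α₁*ε))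
      = Real.exp ((3*α₁+3*α₂/2)*ε) := by rw [← Real.exp_add, ← Real.exp_add]; ring_nf
  have e5 : Real.exp ((2*α₁+α₂/2)*ε) * Real.exp ((α₁+α₂)*ε)
      = Real.exp ((3*α₁+3*α₂/2)*ε) := by rw [← Real.exp_add]; ring_nf
  linear_combination
    (H₅ u (Real.exp (-α₂*ε) * y) * deriv (fun y' => H₂ u y') (Real.exp (-α₂*ε) * y)) * e1
    + (u * H₃ u (Real.exp (-α₂*ε) * y) * deriv (fun y' => H₁ u y') (Real.exp (-α₂*ε) * y)) * e2
    - (u * H₁ u (Real.exp (-α₂*ε) * y) * deriv (fun x' => H₂ x' (Real.exp (-α₂*ε) * y)) u) * e3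
    + (u * H₂ u (Real.exp (-α₂*ε) * y) * deriv (fun x' => H₁ x' (Real.exp (-α₂*ε) * y)) u) * e4
    + (2 * H₁ u (Real.exp (-α₂*ε) * y) * H₂ u (Real.exp (-α₂*ε) * y)) * e5
end

section
/- For the van der Waals quotient solution H₁ = c₂x, H₂ = 0, H₃ = c₁x(x/(x−3))^(2/n), H₅ = 2c₂x(c₂ζ(x−3) + 3Ry)/(nR(x−3)), the equation xH₁·∂H₃/∂x − H₅·∂H₃/∂y + H₂·∂H₅/∂x + H₃(∂H₅/∂y − H₁) = 0 holds for all x > 3 and all y. -/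
theorem vdw_quotient_eq4 (c₁ c₂ R n ζ : ℝ) (hR : R ≠ 0) (hn : n ≠ 0) :
    ∀ x y : ℝ, 3 < x →
      x * (c₂*x) * deriv (fun x' => c₁*x' * (x'/(x'-3)) ^ (2/n)) x
        - (2*c₂*x*(c₂*ζ*(x-3) + 3*R*y)/(n*R*(x-3))) *
            deriv (fun _y' : ℝ => c₁*x * (x/(x-3)) ^ (2/n)) y
        + 0 * deriv (fun x' => 2*c₂*x'*(c₂*ζ*(x'-3) + 3*R*y)/(n*R*(x'-3))) x
        + (c₁*x * (x/(x-3)) ^ (2/n)) *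
            (deriv (fun y' => 2*c₂*x*(c₂*ζ*(x-3) + 3*R*y')/(n*R*(x-3))) y - c₂*x) = 0 := by
  intro x y hx
  have hx3 : x - 3 ≠ 0 := by linarith
  have hxpos : 0 < x := by linarith
  have hg : (0:ℝ) < x/(x-3) := div_pos hxpos (by linarith)
  -- derivative in x of the H₃ function
  have hq : HasDerivAt (fun x' : ℝ => x'/(x'-3))
      ((1*(x-3) - x*1)/(x-3)^2) x :=
    (hasDerivAt_id x).div ((hasDerivAt_id x).sub_const 3) hx3
  have hr : HasDerivAt (fun x' : ℝ => (x'/(x'-3)) ^ (2/n))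
      ((1*(x-3) - x*1)/(x-3)^2 * (2/n) * (x/(x-3)) ^ (2/n - 1)) x :=
    hq.rpow_const (Or.inl (ne_of_gt hg))
  have hf : HasDerivAt (fun x' : ℝ => c₁*x' * (x'/(x'-3)) ^ (2/n))
      ((c₁*1) * (x/(x-3)) ^ (2/n)
        + (c₁*x) * ((1*(x-3) - x*1)/(x-3)^2 * (2/n) * (x/(x-3)) ^ (2/n - 1))) x :=
    ((hasDerivAt_id x).const_mul c₁).mul hr
  rw [hf.deriv]
  -- derivative in y of a constant
  have hc : deriv (fun _y' : ℝ => c₁*x * (x/(x-3)) ^ (2/n)) y = 0 := deriv_const y _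
  rw [hc, mul_zero, sub_zero]
  -- derivative in y of H₅
  have hy : HasDerivAt (fun y' : ℝ => 2*c₂*x*(c₂*ζ*(x-3) + 3*R*y')/(n*R*(x-3)))
      (2*c₂*x*(3*R)/(n*R*(x-3))) y := by
    have : HasDerivAt (fun y' : ℝ => c₂*ζ*(x-3) + 3*R*y') (3*R) y := by
      simpa using (((hasDerivAt_id y).const_mul (3*R)).const_add (c₂*ζ*(x-3)))
    simpa using ((this.const_mul (2*c₂*x)).div_const (n*R*(x-3)))
  rw [hy.deriv]
  -- key rpow identity
  have hkey : (x/(x-3)) ^ (2/n) = (x/(x-3)) ^ (2/n - 1) * (x/(x-3)) := by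
    rw [← Real.rpow_add_one (ne_of_gt hg)]; ring_nf
  rw [hkey]
  field_simp
  ring
end
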